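/- The quasi-shuffle product * on k⟨A⟩, defined by the recursion (aw)*(bv) = a(w*bv) + b(aw*v) + (a⋄b)(w*v) with unit 1, is commutative and associative. -/
import Mathlib


/-!
Quasi-shuffle algebras (Hoffman–Ihara).  We model the span `kA` of the alphabet
(with its commutative associative product `⋄`, written `*` in `L`) as a
non-unital commutative `k`-algebra `L`, and the word algebra `k⟨A⟩` as the
tensor algebra `TensorAlgebra k L`, in which a word `a₁⋯aₙ` is the product
`ι a₁ * ⋯ * ι aₙ`.
-/

open TensorAlgebra

variable (k : Type*) [Field k]
variable {L : Type*} [NonUnitalCommRing L] [Module k L]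
  [SMulCommClass k L L] [IsScalarTower k L L]

/-- The word `a₁⋯aₙ` as an element of the tensor algebra. -/
def word (l : List L) : TensorAlgebra k L := (l.map fun a => TensorAlgebra.ι k a).prod



lemma word_nil : word k ([] : List L) = 1 := rfl

lemma word_cons (a : L) (l : List L) :
    word k (a :: l) = TensorAlgebra.ι k a * word k l := by simp [word]

lemma word_append (u v : List L) : word k (u ++ v) = word k u * word k v := by
  simp [word]

lemma span_words :
    Submodule.span k (Set.range (word k : List L → TensorAlgebra k L)) = ⊤ := by
  rw [eq_top_iff]
  rintro x -
  induction x using TensorAlgebra.induction with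
  | algebraMap r =>
      rw [Algebra.algebraMap_eq_smul_one]
      exact Submodule.smul_mem _ _ (Submodule.subset_span ⟨[], rfl⟩)
  | ι a => exact Submodule.subset_span ⟨[a], by simp [word]⟩
  | mul x y hx hy =>
      have h := Submodule.mul_mem_mul hx hy
      rw [Submodule.span_mul_span] at h
      refine Submodule.span_le.2 ?_ h
      rintro _ ⟨_, ⟨u, rfl⟩, _, ⟨v, rfl⟩, rfl⟩
      exact Submodule.subset_span ⟨u ++ v, word_append k u v⟩
  | add x y hx hy => exact Submodule.add_mem _ hx hy

lemma ext_words {P : Type*} [AddCommMonoid P] [Module k P]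
    {f g : TensorAlgebra k L →ₗ[k] P}
    (h : ∀ l : List L, f (word k l) = g (word k l)) : f = g :=
  LinearMap.ext_on (span_words k) (by rintro _ ⟨l, rfl⟩; exact h l)

/--
The quasi-shuffle product (the `k`-bilinear product on `k⟨A⟩`
with unit `1` satisfying the recursion
`(aw)*(bv) = a(w*bv) + b(aw*v) + (a⋄b)(w*v)`) is commutative and associative.
-/
theorem stmt3
    (m : TensorAlgebra k L →ₗ[k] TensorAlgebra k L →ₗ[k] TensorAlgebra k L)
    (hmul : ∀ x, m 1 x = x) (hmur : ∀ x, m x 1 = x)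
    (hmrec : ∀ (a b : L) (v w : List L),
      m (TensorAlgebra.ι k a * word k v) (TensorAlgebra.ι k b * word k w)
        = TensorAlgebra.ι k a * m (word k v) (TensorAlgebra.ι k b * word k w)
          + TensorAlgebra.ι k b * m (TensorAlgebra.ι k a * word k v) (word k w)
          + TensorAlgebra.ι k (a * b) * m (word k v) (word k w)) :
    (∀ x y, m x y = m y x) ∧ (∀ x y z, m (m x y) z = m x (m y z)) := by
  have hrec' : ∀ (a b : L) (x y : TensorAlgebra k L),
      m (TensorAlgebra.ι k a * x) (TensorAlgebra.ι k b * y)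
        = TensorAlgebra.ι k a * m x (TensorAlgebra.ι k b * y)
          + TensorAlgebra.ι k b * m (TensorAlgebra.ι k a * x) y
          + TensorAlgebra.ι k (a * b) * m x y := by
    intro a b
    have h : (m.comp (LinearMap.mulLeft k (TensorAlgebra.ι k a))).compl₂
          (LinearMap.mulLeft k (TensorAlgebra.ι k b))
        = ((m.compl₂ (LinearMap.mulLeft k (TensorAlgebra.ι k b))).compr₂
              (LinearMap.mulLeft k (TensorAlgebra.ι k a)))
          + ((m.comp (LinearMap.mulLeft k (TensorAlgebra.ι k a))).compr₂
              (LinearMap.mulLeft k (TensorAlgebra.ι k b)))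
          + (m.compr₂ (LinearMap.mulLeft k (TensorAlgebra.ι k (a * b)))) := by
      refine ext_words k fun u => ext_words k fun v => ?_
      simp only [LinearMap.compl₂_apply, LinearMap.compr₂_apply, LinearMap.comp_apply,
        LinearMap.add_apply, LinearMap.mulLeft_apply]
      exact hmrec a b u v
    intro x y
    have h2 := LinearMap.congr_fun (LinearMap.congr_fun h x) y
    simpa only [LinearMap.compl₂_apply, LinearMap.compr₂_apply, LinearMap.comp_apply,
      LinearMap.add_apply, LinearMap.mulLeft_apply] using h2
  -- commutativity on words
  have hcw : ∀ n : ℕ, ∀ u v : List L, u.length + v.length ≤ n →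
      m (word k u) (word k v) = m (word k v) (word k u) := by
    intro n
    induction n with
    | zero =>
        intro u v h
        match u, v with
        | [], [] => rfl
        | a :: u, _ => simp at h
        | [], a :: u => simp at h
    | succ n ih =>
        intro u v h
        match u, v with
        | [], v => rw [word_nil, hmul, hmur]
        | a :: u, [] => rw [word_nil, hmul, hmur]
        | a :: u, b :: v =>
            simp only [List.length_cons] at h
            have h1 : m (word k u) (TensorAlgebra.ι k b * word k v)
                = m (TensorAlgebra.ι k b * word k v) (word k u) := by
              simpa [word_cons] using ih u (b :: v) (by simp; omega)
            have h2 : m (TensorAlgebra.ι k a * word k u) (word k v)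
                = m (word k v) (TensorAlgebra.ι k a * word k u) := by
              simpa [word_cons] using ih (a :: u) v (by simp; omega)
            have h3 : m (word k u) (word k v) = m (word k v) (word k u) :=
              ih u v (by omega)
            rw [word_cons, word_cons, hrec' a b, hrec' b a, h1, h2, h3, mul_comm b a]
            abel
  have hcomm : ∀ x y, m x y = m y x := by
    have h : m = m.flip := by
      refine ext_words k fun u => ext_words k fun v => ?_
      simpa using hcw (u.length + v.length) u v le_rfl
    intro x y
    have h2 := LinearMap.congr_fun (LinearMap.congr_fun h x) y
    simpa using h2
  refine ⟨hcomm, ?_⟩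
  -- associativity on words
  have haw : ∀ n : ℕ, ∀ u v w : List L, u.length + v.length + w.length ≤ n →
      m (m (word k u) (word k v)) (word k w)
        = m (word k u) (m (word k v) (word k w)) := by
    intro n
    induction n with
    | zero =>
        intro u v w h
        match u, v, w with
        | [], [], [] => rw [word_nil, hmul]
        | a :: u, _, _ => simp at h
        | [], a :: u, _ => simp at h
        | [], [], a :: u => simp at h
    | succ n ih =>
        intro u v w h
        match u, v, w with
        | [], v, w => rw [word_nil, hmul, hmul]
        | a :: u, [], w => rw [word_nil, hmur, hmul]
        | a :: u, b :: v, [] => rw [word_nil, hmur, hmur]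
        | a :: u, b :: v, c :: w =>
            simp only [List.length_cons] at h
            have e1 : m (m (word k u) (TensorAlgebra.ι k b * word k v))
                  (TensorAlgebra.ι k c * word k w)
                = m (word k u)
                  (m (TensorAlgebra.ι k b * word k v) (TensorAlgebra.ι k c * word k w)) := by
              simpa [word_cons] using ih u (b :: v) (c :: w) (by simp; omega)
            have e2 : m (m (TensorAlgebra.ι k a * word k u) (TensorAlgebra.ι k b * word k v))
                  (word k w)
                = m (TensorAlgebra.ι k a * word k u)
                  (m (TensorAlgebra.ι k b * word k v) (word k w)) := by
              simpa [word_cons] using ih (a :: u) (b :: v) w (by simp; omega)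
            have e3 : m (m (word k u) (TensorAlgebra.ι k b * word k v)) (word k w)
                = m (word k u) (m (TensorAlgebra.ι k b * word k v) (word k w)) := by
              simpa [word_cons] using ih u (b :: v) w (by simp; omega)
            have e4 : m (m (TensorAlgebra.ι k a * word k u) (word k v))
                  (TensorAlgebra.ι k c * word k w)
                = m (TensorAlgebra.ι k a * word k u)
                  (m (word k v) (TensorAlgebra.ι k c * word k w)) := by
              simpa [word_cons] using ih (a :: u) v (c :: w) (by simp; omega)
            have e5 : m (m (TensorAlgebra.ι k a * word k u) (word k v)) (word k w)
                = m (TensorAlgebra.ι k a * word k u) (m (word k v) (word k w)) := by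
              simpa [word_cons] using ih (a :: u) v w (by simp; omega)
            have e6 : m (m (word k u) (word k v)) (TensorAlgebra.ι k c * word k w)
                = m (word k u) (m (word k v) (TensorAlgebra.ι k c * word k w)) := by
              simpa [word_cons] using ih u v (c :: w) (by simp; omega)
            have e7 : m (m (word k u) (word k v)) (word k w)
                = m (word k u) (m (word k v) (word k w)) :=
              ih u v w (by omega)
            rw [word_cons, word_cons, word_cons]
            rw [hrec' a b (word k u) (word k v)]
            simp only [map_add, LinearMap.add_apply]
            rw [hrec' a c, hrec' b c, hrec' (a * b) c]
            rw [e1, e3, e4, e5, e6, e7, mul_assoc a b c]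
            rw [hrec' b c (word k v) (word k w)]
            simp only [map_add, LinearMap.add_apply, mul_add]
            rw [hrec' a b (word k u) (m (word k v) (TensorAlgebra.ι k c * word k w)),
              hrec' a c (word k u) (m (TensorAlgebra.ι k b * word k v) (word k w)),
              hrec' a (b * c) (word k u) (m (word k v) (word k w))]
            rw [← e2, hrec' a b (word k u) (word k v)]
            simp only [map_add, LinearMap.add_apply, mul_add]
            abel
  have hassoc : ∀ x y z, m (m x y) z = m x (m y z) := by
    have h : m.compr₂ m = ((LinearMap.llcomp k (TensorAlgebra k L) (TensorAlgebra k L)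
        (TensorAlgebra k L)).comp m).compl₂ m := by
      refine ext_words k fun u => ext_words k fun v => ext_words k fun w => ?_
      simpa using haw (u.length + v.length + w.length) u v w le_rfl
    intro x y z
    have h2 := LinearMap.congr_fun (LinearMap.congr_fun (LinearMap.congr_fun h x) y) z
    simpa using h2
  exact hassoc
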